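/- Let n₁,…,n_U ≥ 1 with ∑ n_u = n. Let G^s ∈ ℝ^{np×np} be block-structured by classes: within class u with n_u ≥ 2, diagonal blocks equal symmetric Gᵃᵘ, off-diagonal blocks within class u equal symmetric Gᵇᵘ, blocks between classes u ≠ v all equal Gᶜᵘᵛ (with Gᶜᵛᵘ = (Gᶜᵘᵛ)ᵀ), and for classes with n_u = 1 set Gᵇᵘ = 0. Define H ∈ ℝ^{Up×Up} by H^{uu} = n_u Gᵃᵘ + n_u(n_u−1)Gᵇᵘ and H^{uv} = n_u n_v Gᶜᵘᵛ for u ≠ v. Then G^s ⪰ 0 if and only if H ⪰ 0 and, for every class u with n_u ≥ 2, Gᵃᵘ − Gᵇᵘ ⪰ 0, and for every class u with n_u = 1, Gᵃᵘ ⪰ 0. -/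

import Mathlib

open Matrix

namespace Stmt13Aux

open Finset

variable {p : ℕ}

/-- scalar quadratic/bilinear form -/
def Qf (A : Matrix (Fin p) (Fin p) ℝ) (f g : Fin p → ℝ) : ℝ :=
  ∑ x, ∑ y, f x * A x y * g y

lemma Qf_eq_dot (A : Matrix (Fin p) (Fin p) ℝ) (f g : Fin p → ℝ) :
    Qf A f g = f ⬝ᵥ A *ᵥ g := by
  simp [Qf, dotProduct, mulVec, Finset.mul_sum, mul_assoc]

lemma Qf_nonneg {A : Matrix (Fin p) (Fin p) ℝ} (hA : A.PosSemidef) (f : Fin p → ℝ) :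
    0 ≤ Qf A f f := by
  rw [Qf_eq_dot]
  simpa using hA.dotProduct_mulVec_nonneg f

lemma Qf_congr {A : Matrix (Fin p) (Fin p) ℝ} {f g f' g' : Fin p → ℝ}
    (hf : ∀ x, f x = f' x) (hg : ∀ x, g x = g' x) : Qf A f g = Qf A f' g' := by
  simp only [Qf, hf, hg]

lemma Qf_zero_left {A : Matrix (Fin p) (Fin p) ℝ} {f : Fin p → ℝ}
    (hf : ∀ x, f x = 0) (g : Fin p → ℝ) : Qf A f g = 0 := by
  simp [Qf, hf]

lemma Qf_sum_left {ι : Type*} (s : Finset ι) (A : Matrix (Fin p) (Fin p) ℝ)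
    (F : ι → Fin p → ℝ) (g : Fin p → ℝ) :
    Qf A (fun x => ∑ i ∈ s, F i x) g = ∑ i ∈ s, Qf A (F i) g := by
  simp only [Qf, Finset.sum_mul]
  calc (∑ x, ∑ y, ∑ i ∈ s, F i x * A x y * g y)
      = ∑ x, ∑ i ∈ s, ∑ y, F i x * A x y * g y :=
        Finset.sum_congr rfl fun x _ => Finset.sum_comm
    _ = ∑ i ∈ s, ∑ x, ∑ y, F i x * A x y * g y := Finset.sum_comm

lemma Qf_sum_right {ι : Type*} (s : Finset ι) (A : Matrix (Fin p) (Fin p) ℝ)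
    (f : Fin p → ℝ) (G : ι → Fin p → ℝ) :
    Qf A f (fun x => ∑ i ∈ s, G i x) = ∑ i ∈ s, Qf A f (G i) := by
  simp only [Qf, Finset.mul_sum]
  calc (∑ x, ∑ y, ∑ i ∈ s, f x * A x y * G i y)
      = ∑ x, ∑ i ∈ s, ∑ y, f x * A x y * G i y :=
        Finset.sum_congr rfl fun x _ => Finset.sum_comm
    _ = ∑ i ∈ s, ∑ x, ∑ y, f x * A x y * G i y := Finset.sum_comm

lemma Qf_smul_left (A : Matrix (Fin p) (Fin p) ℝ) (c : ℝ) (f g : Fin p → ℝ) :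
    Qf A (fun x => c * f x) g = c * Qf A f g := by
  simp only [Qf, Finset.mul_sum]
  exact Finset.sum_congr rfl fun x _ => Finset.sum_congr rfl fun y _ => by ring

lemma Qf_smul_right (A : Matrix (Fin p) (Fin p) ℝ) (c : ℝ) (f g : Fin p → ℝ) :
    Qf A f (fun x => c * g x) = c * Qf A f g := by
  simp only [Qf, Finset.mul_sum]
  exact Finset.sum_congr rfl fun x _ => Finset.sum_congr rfl fun y _ => by ring

lemma Qf_sub_left (A : Matrix (Fin p) (Fin p) ℝ) (f f' g : Fin p → ℝ) :
    Qf A (fun x => f x - f' x) g = Qf A f g - Qf A f' g := by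
  simp only [Qf, ← Finset.sum_sub_distrib]
  exact Finset.sum_congr rfl fun x _ => Finset.sum_congr rfl fun y _ => by ring

lemma Qf_sub_right (A : Matrix (Fin p) (Fin p) ℝ) (f g g' : Fin p → ℝ) :
    Qf A f (fun x => g x - g' x) = Qf A f g - Qf A f g' := by
  simp only [Qf, ← Finset.sum_sub_distrib]
  exact Finset.sum_congr rfl fun x _ => Finset.sum_congr rfl fun y _ => by ring

lemma Qf_sub_mat (A B : Matrix (Fin p) (Fin p) ℝ) (f g : Fin p → ℝ) :
    Qf (A - B) f g = Qf A f g - Qf B f g := by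
  simp only [Qf, Matrix.sub_apply, ← Finset.sum_sub_distrib]
  exact Finset.sum_congr rfl fun x _ => Finset.sum_congr rfl fun y _ => by ring

lemma Qf_neg_neg (A : Matrix (Fin p) (Fin p) ℝ) (f g : Fin p → ℝ) :
    Qf A (fun x => -(f x)) (fun x => -(g x)) = Qf A f g := by
  simp only [Qf]
  exact Finset.sum_congr rfl fun x _ => Finset.sum_congr rfl fun y _ => by ring

lemma Qf_lin2 (B C : Matrix (Fin p) (Fin p) ℝ) (a b : ℝ) (f g : Fin p → ℝ) :
    ∑ x, ∑ y, f x * (a * B x y + b * C x y) * g y = a * Qf B f g + b * Qf C f g := by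
  simp only [Qf, Finset.mul_sum, ← Finset.sum_add_distrib]
  exact Finset.sum_congr rfl fun x _ => Finset.sum_congr rfl fun y _ => by ring

lemma Qf_scal (B : Matrix (Fin p) (Fin p) ℝ) (a : ℝ) (f g : Fin p → ℝ) :
    ∑ x, ∑ y, f x * (a * B x y) * g y = a * Qf B f g := by
  simp only [Qf, Finset.mul_sum]
  exact Finset.sum_congr rfl fun x _ => Finset.sum_congr rfl fun y _ => by ring

lemma quad_expand {n : Type*} [Fintype n] (M : Matrix n n ℝ) (z : n → ℝ) :
    z ⬝ᵥ M *ᵥ z = ∑ a, ∑ b, z a * M a b * z b := by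
  simp [dotProduct, mulVec, Finset.mul_sum, mul_assoc]

lemma sum_reorder {U p : ℕ} {nv : Fin U → ℕ}
    (F : (Σ u : Fin U, Fin (nv u)) × Fin p → (Σ u : Fin U, Fin (nv u)) × Fin p → ℝ) :
    ∑ a, ∑ b, F a b
      = ∑ u, ∑ v, ∑ i, ∑ j, ∑ x, ∑ y, F (⟨u, i⟩, x) (⟨v, j⟩, y) := by
  calc (∑ a, ∑ b, F a b)
      = ∑ a, ∑ v, ∑ j, ∑ y, F a (⟨v, j⟩, y) := by
        refine Finset.sum_congr rfl fun a _ => ?_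
        rw [Fintype.sum_prod_type, ← Finset.univ_sigma_univ, Finset.sum_sigma]
    _ = ∑ u, ∑ i, ∑ x, ∑ v, ∑ j, ∑ y, F (⟨u, i⟩, x) (⟨v, j⟩, y) := by
        rw [Fintype.sum_prod_type, ← Finset.univ_sigma_univ, Finset.sum_sigma]
    _ = ∑ u, ∑ v, ∑ i, ∑ j, ∑ x, ∑ y, F (⟨u, i⟩, x) (⟨v, j⟩, y) := by
        refine Finset.sum_congr rfl fun u _ => ?_
        calc (∑ i, ∑ x, ∑ v, ∑ j, ∑ y, F (⟨u, i⟩, x) (⟨v, j⟩, y))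
            = ∑ i, ∑ v, ∑ x, ∑ j, ∑ y, F (⟨u, i⟩, x) (⟨v, j⟩, y) :=
              Finset.sum_congr rfl fun i _ => Finset.sum_comm
          _ = ∑ v, ∑ i, ∑ x, ∑ j, ∑ y, F (⟨u, i⟩, x) (⟨v, j⟩, y) := Finset.sum_comm
          _ = ∑ v, ∑ i, ∑ j, ∑ x, ∑ y, F (⟨u, i⟩, x) (⟨v, j⟩, y) :=
              Finset.sum_congr rfl fun v _ =>
                Finset.sum_congr rfl fun i _ => Finset.sum_comm

lemma sum_reorder2 {U p : ℕ} (F : (Fin U × Fin p) → (Fin U × Fin p) → ℝ) :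
    ∑ a, ∑ b, F a b = ∑ u, ∑ v, ∑ x, ∑ y, F (u, x) (v, y) := by
  calc (∑ a, ∑ b, F a b)
      = ∑ a, ∑ v, ∑ y, F a (v, y) := by
        refine Finset.sum_congr rfl fun a _ => ?_
        rw [Fintype.sum_prod_type]
    _ = ∑ u, ∑ x, ∑ v, ∑ y, F (u, x) (v, y) := by rw [Fintype.sum_prod_type]
    _ = ∑ u, ∑ v, ∑ x, ∑ y, F (u, x) (v, y) :=
        Finset.sum_congr rfl fun u _ => Finset.sum_comm

lemma sum_two {m : ℕ} {i0 i1 : Fin m} (h : i0 ≠ i1) (a b : ℝ) :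
    (∑ j : Fin m, (if j = i0 then a else if j = i1 then b else 0)) = a + b := by
  have key : ∀ j : Fin m, (if j = i0 then a else if j = i1 then b else 0)
      = (if j = i0 then a else 0) + (if j = i1 then b else 0) := by
    intro j
    by_cases h0 : j = i0
    · subst h0; simp [h]
    · simp [h0]
  rw [Finset.sum_congr rfl fun j _ => key j, Finset.sum_add_distrib]
  simp

end Stmt13Aux

open Stmt13Aux Finset

theorem stmt_13 (U p : ℕ) (nv : Fin U → ℕ) (hnv : ∀ u, 1 ≤ nv u)
    (Ga Gb : Fin U → Matrix (Fin p) (Fin p) ℝ)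
    (Gc : Fin U → Fin U → Matrix (Fin p) (Fin p) ℝ)
    (hGa : ∀ u, (Ga u).IsSymm) (hGb : ∀ u, (Gb u).IsSymm)
    (hGb1 : ∀ u, nv u = 1 → Gb u = 0)
    (hGc : ∀ u v, Gc v u = (Gc u v)ᵀ)
    (Gs : Matrix ((Σ u : Fin U, Fin (nv u)) × Fin p) ((Σ u : Fin U, Fin (nv u)) × Fin p) ℝ)
    (hdiag : ∀ (u : Fin U) (i j : Fin (nv u)) (x y : Fin p),
      Gs (⟨u, i⟩, x) (⟨u, j⟩, y) = if i = j then Ga u x y else Gb u x y)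
    (hoff : ∀ (u v : Fin U), u ≠ v → ∀ (i : Fin (nv u)) (j : Fin (nv v)) (x y : Fin p),
      Gs (⟨u, i⟩, x) (⟨v, j⟩, y) = Gc u v x y)
    (H : Matrix (Fin U × Fin p) (Fin U × Fin p) ℝ)
    (hH : ∀ u v x y, H (u, x) (v, y) =
      if u = v then (nv u : ℝ) * Ga u x y + (nv u : ℝ) * ((nv u : ℝ) - 1) * Gb u x y
      else (nv u : ℝ) * (nv v : ℝ) * Gc u v x y) :
    Gs.PosSemidef ↔
      H.PosSemidef ∧ (∀ u, 2 ≤ nv u → (Ga u - Gb u).PosSemidef) ∧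
        (∀ u, nv u = 1 → (Ga u).PosSemidef) := by
  classical
  have hn0 : ∀ u, (nv u : ℝ) ≠ 0 := fun u => by
    have := hnv u; positivity
  have ga : ∀ u x y, Ga u y x = Ga u x y := fun u x y => (hGa u).apply x y
  have gb : ∀ u x y, Gb u y x = Gb u x y := fun u x y => (hGb u).apply x y
  -- expansion of the quadratic form of Gs
  have expandGs : ∀ z : (Σ u : Fin U, Fin (nv u)) × Fin p → ℝ,
      z ⬝ᵥ Gs *ᵥ z = ∑ u, ∑ v, (if u = v
        then Qf (Gb u) (fun x => ∑ i, z (⟨u, i⟩, x)) (fun x => ∑ i, z (⟨u, i⟩, x))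
             + ∑ i, Qf (Ga u - Gb u) (fun x => z (⟨u, i⟩, x)) (fun x => z (⟨u, i⟩, x))
        else Qf (Gc u v) (fun x => ∑ i, z (⟨u, i⟩, x)) (fun x => ∑ j, z (⟨v, j⟩, x))) := by
    intro z
    rw [quad_expand, sum_reorder]
    refine Finset.sum_congr rfl fun u _ => Finset.sum_congr rfl fun v _ => ?_
    by_cases huv : u = v
    · subst huv
      rw [if_pos rfl]
      have step : ∀ i j : Fin (nv u),
          (∑ x, ∑ y, z (⟨u, i⟩, x) * Gs (⟨u, i⟩, x) (⟨u, j⟩, y) * z (⟨u, j⟩, y))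
          = Qf (Gb u) (fun x => z (⟨u, i⟩, x)) (fun x => z (⟨u, j⟩, x))
            + (if i = j then Qf (Ga u - Gb u) (fun x => z (⟨u, i⟩, x))
                (fun x => z (⟨u, j⟩, x)) else 0) := by
        intro i j
        by_cases hij : i = j
        · subst hij
          simp only [hdiag, eq_self_iff_true, if_true, Qf_sub_mat]
          show Qf (Ga u) (fun x => z (⟨u, i⟩, x)) (fun x => z (⟨u, i⟩, x)) = _
          ring
        · simp only [hdiag, if_neg hij, add_zero]
          rfl
      calc
        (∑ i, ∑ j, ∑ x, ∑ y, z (⟨u, i⟩, x) * Gs (⟨u, i⟩, x) (⟨u, j⟩, y) * z (⟨u, j⟩, y))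
            = ∑ i, ∑ j, (Qf (Gb u) (fun x => z (⟨u, i⟩, x)) (fun x => z (⟨u, j⟩, x))
              + (if i = j then Qf (Ga u - Gb u) (fun x => z (⟨u, i⟩, x))
                  (fun x => z (⟨u, j⟩, x)) else 0)) :=
          Finset.sum_congr rfl fun i _ => Finset.sum_congr rfl fun j _ => step i j
        _ = (∑ i, ∑ j, Qf (Gb u) (fun x => z (⟨u, i⟩, x)) (fun x => z (⟨u, j⟩, x)))
              + ∑ i, ∑ j, (if i = j then Qf (Ga u - Gb u) (fun x => z (⟨u, i⟩, x))
                  (fun x => z (⟨u, j⟩, x)) else 0) := by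
          rw [← Finset.sum_add_distrib]
          exact Finset.sum_congr rfl fun i _ => by rw [← Finset.sum_add_distrib]
        _ = _ := by
          congr 1
          · rw [Qf_sum_left]
            exact Finset.sum_congr rfl fun i _ => (Qf_sum_right univ (Gb u) _ _).symm
          · exact Finset.sum_congr rfl fun i _ => by simp
    · rw [if_neg huv]
      have step : ∀ (i : Fin (nv u)) (j : Fin (nv v)),
          (∑ x, ∑ y, z (⟨u, i⟩, x) * Gs (⟨u, i⟩, x) (⟨v, j⟩, y) * z (⟨v, j⟩, y))
          = Qf (Gc u v) (fun x => z (⟨u, i⟩, x)) (fun x => z (⟨v, j⟩, x)) := by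
        intro i j
        simp only [hoff u v huv]
        rfl
      rw [Qf_sum_left]
      refine Finset.sum_congr rfl fun i _ => ?_
      rw [Qf_sum_right]
      exact Finset.sum_congr rfl fun j _ => step i j
  -- expansion of the quadratic form of H
  have expandH : ∀ w : Fin U × Fin p → ℝ,
      w ⬝ᵥ H *ᵥ w = ∑ u, ∑ v, (if u = v
        then ((nv u : ℝ) * Qf (Ga u) (fun x => w (u, x)) (fun x => w (u, x))
              + (nv u : ℝ) * ((nv u : ℝ) - 1) * Qf (Gb u) (fun x => w (u, x)) (fun x => w (u, x)))
        else (nv u : ℝ) * (nv v : ℝ) * Qf (Gc u v) (fun x => w (u, x)) (fun x => w (v, x))) := by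
    intro w
    rw [quad_expand, sum_reorder2]
    refine Finset.sum_congr rfl fun u _ => Finset.sum_congr rfl fun v _ => ?_
    by_cases huv : u = v
    · subst huv
      simp only [hH, eq_self_iff_true, if_true]
      exact Qf_lin2 (Ga u) (Gb u) _ _ _ _
    · simp only [hH, if_neg huv]
      exact Qf_scal (Gc u v) _ _ _
  -- master identity
  have master : ∀ (z : (Σ u : Fin U, Fin (nv u)) × Fin p → ℝ) (w : Fin U × Fin p → ℝ),
      (∀ u x, (nv u : ℝ) * w (u, x) = ∑ i, z (⟨u, i⟩, x)) →
      z ⬝ᵥ Gs *ᵥ z = w ⬝ᵥ H *ᵥ w +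
        ∑ u, ∑ i, Qf (Ga u - Gb u) (fun x => z (⟨u, i⟩, x) - w (u, x))
          (fun x => z (⟨u, i⟩, x) - w (u, x)) := by
    intro z w hw
    rw [expandGs z, expandH w]
    have key : ∀ u v, (if u = v
        then Qf (Gb u) (fun x => ∑ i, z (⟨u, i⟩, x)) (fun x => ∑ i, z (⟨u, i⟩, x))
             + ∑ i, Qf (Ga u - Gb u) (fun x => z (⟨u, i⟩, x)) (fun x => z (⟨u, i⟩, x))
        else Qf (Gc u v) (fun x => ∑ i, z (⟨u, i⟩, x)) (fun x => ∑ j, z (⟨v, j⟩, x)))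
        = (if u = v
        then ((nv u : ℝ) * Qf (Ga u) (fun x => w (u, x)) (fun x => w (u, x))
              + (nv u : ℝ) * ((nv u : ℝ) - 1) * Qf (Gb u) (fun x => w (u, x)) (fun x => w (u, x)))
        else (nv u : ℝ) * (nv v : ℝ) * Qf (Gc u v) (fun x => w (u, x)) (fun x => w (v, x)))
        + (if u = v then
            ∑ i, Qf (Ga u - Gb u) (fun x => z (⟨u, i⟩, x) - w (u, x))
              (fun x => z (⟨u, i⟩, x) - w (u, x)) else 0) := by
      intro u v
      by_cases huv : u = v
      · subst huv
        simp only [eq_self_iff_true, if_true]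
        have hSw : ∀ x, (∑ i, z (⟨u, i⟩, x)) = (nv u : ℝ) * w (u, x) := fun x => (hw u x).symm
        have e1 : Qf (Gb u) (fun x => ∑ i, z (⟨u, i⟩, x)) (fun x => ∑ i, z (⟨u, i⟩, x))
            = (nv u : ℝ) * ((nv u : ℝ) * Qf (Gb u) (fun x => w (u, x)) (fun x => w (u, x))) := by
          rw [Qf_congr hSw hSw, Qf_smul_left, Qf_smul_right]
        have e2 : ∀ i : Fin (nv u),
            Qf (Ga u - Gb u) (fun x => z (⟨u, i⟩, x) - w (u, x))
              (fun x => z (⟨u, i⟩, x) - w (u, x))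
            = Qf (Ga u - Gb u) (fun x => z (⟨u, i⟩, x)) (fun x => z (⟨u, i⟩, x))
              - Qf (Ga u - Gb u) (fun x => z (⟨u, i⟩, x)) (fun x => w (u, x))
              - Qf (Ga u - Gb u) (fun x => w (u, x)) (fun x => z (⟨u, i⟩, x))
              + Qf (Ga u - Gb u) (fun x => w (u, x)) (fun x => w (u, x)) := by
          intro i
          rw [Qf_sub_left, Qf_sub_right, Qf_sub_right]
          ring
        have e3 : (∑ i, Qf (Ga u - Gb u) (fun x => z (⟨u, i⟩, x)) (fun x => w (u, x)))
            = (nv u : ℝ) * Qf (Ga u - Gb u) (fun x => w (u, x)) (fun x => w (u, x)) := by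
          rw [← Qf_sum_left, Qf_congr hSw (fun x => rfl), Qf_smul_left]
        have e4 : (∑ i, Qf (Ga u - Gb u) (fun x => w (u, x)) (fun x => z (⟨u, i⟩, x)))
            = (nv u : ℝ) * Qf (Ga u - Gb u) (fun x => w (u, x)) (fun x => w (u, x)) := by
          rw [← Qf_sum_right, Qf_congr (fun x => rfl) hSw, Qf_smul_right]
        have e5 : (∑ _i : Fin (nv u),
            Qf (Ga u - Gb u) (fun x => w (u, x)) (fun x => w (u, x)))
            = (nv u : ℝ) * Qf (Ga u - Gb u) (fun x => w (u, x)) (fun x => w (u, x)) := by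
          rw [Finset.sum_const, Finset.card_univ, Fintype.card_fin, nsmul_eq_mul]
        have esum : (∑ i, Qf (Ga u - Gb u) (fun x => z (⟨u, i⟩, x) - w (u, x))
              (fun x => z (⟨u, i⟩, x) - w (u, x)))
            = (∑ i, Qf (Ga u - Gb u) (fun x => z (⟨u, i⟩, x)) (fun x => z (⟨u, i⟩, x)))
              - (nv u : ℝ) * Qf (Ga u - Gb u) (fun x => w (u, x)) (fun x => w (u, x)) := by
          calc (∑ i, Qf (Ga u - Gb u) (fun x => z (⟨u, i⟩, x) - w (u, x))
              (fun x => z (⟨u, i⟩, x) - w (u, x)))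
              = ∑ i, (Qf (Ga u - Gb u) (fun x => z (⟨u, i⟩, x)) (fun x => z (⟨u, i⟩, x))
                - Qf (Ga u - Gb u) (fun x => z (⟨u, i⟩, x)) (fun x => w (u, x))
                - Qf (Ga u - Gb u) (fun x => w (u, x)) (fun x => z (⟨u, i⟩, x))
                + Qf (Ga u - Gb u) (fun x => w (u, x)) (fun x => w (u, x))) :=
            Finset.sum_congr rfl fun i _ => e2 i
          _ = _ := by
            rw [Finset.sum_add_distrib, Finset.sum_sub_distrib, Finset.sum_sub_distrib,
              e3, e4, e5]
            ring
        rw [e1, esum]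
        simp only [Qf_sub_mat, Finset.sum_sub_distrib]
        ring
      · simp only [if_neg huv, add_zero]
        have hSu : ∀ x, (∑ i, z (⟨u, i⟩, x)) = (nv u : ℝ) * w (u, x) := fun x => (hw u x).symm
        have hSv : ∀ x, (∑ j, z (⟨v, j⟩, x)) = (nv v : ℝ) * w (v, x) := fun x => (hw v x).symm
        rw [Qf_congr hSu hSv, Qf_smul_left, Qf_smul_right]
        ring
    calc (∑ u, ∑ v, (if u = v
        then Qf (Gb u) (fun x => ∑ i, z (⟨u, i⟩, x)) (fun x => ∑ i, z (⟨u, i⟩, x))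
             + ∑ i, Qf (Ga u - Gb u) (fun x => z (⟨u, i⟩, x)) (fun x => z (⟨u, i⟩, x))
        else Qf (Gc u v) (fun x => ∑ i, z (⟨u, i⟩, x)) (fun x => ∑ j, z (⟨v, j⟩, x))))
        = ∑ u, ∑ v, ((if u = v
        then ((nv u : ℝ) * Qf (Ga u) (fun x => w (u, x)) (fun x => w (u, x))
              + (nv u : ℝ) * ((nv u : ℝ) - 1) * Qf (Gb u) (fun x => w (u, x)) (fun x => w (u, x)))
        else (nv u : ℝ) * (nv v : ℝ) * Qf (Gc u v) (fun x => w (u, x)) (fun x => w (v, x)))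
        + (if u = v then
            ∑ i, Qf (Ga u - Gb u) (fun x => z (⟨u, i⟩, x) - w (u, x))
              (fun x => z (⟨u, i⟩, x) - w (u, x)) else 0)) :=
      Finset.sum_congr rfl fun u _ => Finset.sum_congr rfl fun v _ => key u v
    _ = ∑ u, ((∑ v, (if u = v
          then ((nv u : ℝ) * Qf (Ga u) (fun x => w (u, x)) (fun x => w (u, x))
            + (nv u : ℝ) * ((nv u : ℝ) - 1) * Qf (Gb u) (fun x => w (u, x)) (fun x => w (u, x)))
          else (nv u : ℝ) * (nv v : ℝ) * Qf (Gc u v) (fun x => w (u, x)) (fun x => w (v, x))))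
        + ∑ i, Qf (Ga u - Gb u) (fun x => z (⟨u, i⟩, x) - w (u, x))
            (fun x => z (⟨u, i⟩, x) - w (u, x))) := by
      refine Finset.sum_congr rfl fun u _ => ?_
      rw [Finset.sum_add_distrib, Finset.sum_ite_eq]
      simp only [Finset.mem_univ, if_true]
    _ = _ := Finset.sum_add_distrib
  -- Hermitian facts
  have hGsherm : Gs.IsHermitian := by
    show Gsᴴ = Gs
    ext ⟨⟨u, i⟩, x⟩ ⟨⟨v, j⟩, y⟩
    rw [Matrix.conjTranspose_apply, star_trivial]
    by_cases huv : u = v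
    · subst huv
      rw [hdiag, hdiag]
      by_cases hij : i = j
      · subst hij
        simp only [eq_self_iff_true, if_true]
        exact ga u x y
      · rw [if_neg (Ne.symm hij), if_neg hij]
        exact gb u x y
    · rw [hoff v u (Ne.symm huv), hoff u v huv, hGc u v, Matrix.transpose_apply]
  have hHherm : H.IsHermitian := by
    show Hᴴ = H
    ext ⟨u, x⟩ ⟨v, y⟩
    rw [Matrix.conjTranspose_apply, star_trivial, hH, hH]
    by_cases huv : u = v
    · subst huv
      simp only [eq_self_iff_true, if_true]
      rw [ga u x y, gb u x y]
    · rw [if_neg (Ne.symm huv), if_neg huv, hGc u v, Matrix.transpose_apply]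
      ring
  constructor
  · -- forward direction
    intro hGs
    refine ⟨.of_dotProduct_mulVec_nonneg hHherm ?_, ?_, ?_⟩
    · -- H is PSD
      intro w0
      have hw : ∀ u x, (nv u : ℝ) * w0 (u, x)
          = ∑ _i : Fin (nv u), w0 (u, x) := by
        intro u x
        rw [Finset.sum_const, Finset.card_univ, Fintype.card_fin, nsmul_eq_mul]
      have h0 := hGs.dotProduct_mulVec_nonneg (fun a => w0 (a.1.1, a.2))
      rw [star_trivial, master (fun a => w0 (a.1.1, a.2)) w0 hw] at h0
      have hz : (∑ u, ∑ i : Fin (nv u), Qf (Ga u - Gb u)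
          (fun x => (fun a : (Σ u : Fin U, Fin (nv u)) × Fin p => w0 (a.1.1, a.2)) (⟨u, i⟩, x)
            - w0 (u, x))
          (fun x => (fun a : (Σ u : Fin U, Fin (nv u)) × Fin p => w0 (a.1.1, a.2)) (⟨u, i⟩, x)
            - w0 (u, x))) = 0 :=
        Finset.sum_eq_zero fun u _ => Finset.sum_eq_zero fun i _ =>
          Qf_zero_left (fun x => sub_self _) _
      rw [hz, add_zero] at h0
      simpa using h0
    · -- Ga u - Gb u PSD when 2 ≤ nv u
      intro u hu
      have hherm : (Ga u - Gb u).IsHermitian := by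
        show (Ga u - Gb u)ᴴ = Ga u - Gb u
        ext x y
        rw [Matrix.conjTranspose_apply, star_trivial, Matrix.sub_apply, Matrix.sub_apply,
          ga u x y, gb u x y]
      refine .of_dotProduct_mulVec_nonneg hherm fun f => ?_
      rw [star_trivial, ← Qf_eq_dot]
      set i0 : Fin (nv u) := ⟨0, by omega⟩ with hi0
      set i1 : Fin (nv u) := ⟨1, by omega⟩ with hi1
      have h01 : i0 ≠ i1 := by simp [hi0, hi1, Fin.ext_iff]
      set z : ((u' : Fin U) × Fin (nv u')) × Fin p → ℝ :=
        fun a => if a.1 = (⟨u, i0⟩ : Σ u', Fin (nv u')) then f a.2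
          else if a.1 = (⟨u, i1⟩ : Σ u', Fin (nv u')) then -f a.2 else 0 with hzdef
      have hzval : ∀ (u' : Fin U) (i : Fin (nv u')) (x : Fin p),
          z (⟨u', i⟩, x) = if (⟨u', i⟩ : Σ u', Fin (nv u')) = ⟨u, i0⟩ then f x
            else if (⟨u', i⟩ : Σ u', Fin (nv u')) = ⟨u, i1⟩ then -f x else 0 :=
        fun u' i x => rfl
      have hw : ∀ (u' : Fin U) (x : Fin p),
          (nv u' : ℝ) * (fun _ : Fin U × Fin p => (0 : ℝ)) (u', x)
          = ∑ i, z (⟨u', i⟩, x) := by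
        intro u' x
        by_cases hu' : u' = u
        · subst hu'
          have : ∀ i : Fin (nv u'), z (⟨u', i⟩, x)
              = if i = i0 then f x else if i = i1 then -f x else 0 := by
            intro i
            rw [hzval]
            simp [Sigma.mk.inj_iff]
          rw [Finset.sum_congr rfl fun i _ => this i, sum_two h01]
          simp
        · have : ∀ i : Fin (nv u'), z (⟨u', i⟩, x) = 0 := by
            intro i
            rw [hzval]
            simp [Sigma.mk.inj_iff, hu']
          rw [Finset.sum_congr rfl fun i _ => this i]
          simp
      have h0 := hGs.dotProduct_mulVec_nonneg z
      rw [star_trivial, master z (fun _ : Fin U × Fin p => (0 : ℝ)) hw] at h0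
      have hH0 : (fun _ : Fin U × Fin p => (0 : ℝ)) ⬝ᵥ
          H *ᵥ (fun _ : Fin U × Fin p => (0 : ℝ)) = 0 := by
        simp [dotProduct]
      have hsum : (∑ u', ∑ i : Fin (nv u'), Qf (Ga u' - Gb u')
          (fun x => z (⟨u', i⟩, x) - (fun _ : Fin U × Fin p => (0 : ℝ)) (u', x))
          (fun x => z (⟨u', i⟩, x) - (fun _ : Fin U × Fin p => (0 : ℝ)) (u', x)))
          = 2 * Qf (Ga u - Gb u) f f := by
        rw [Finset.sum_eq_single u]
        · have key : ∀ i : Fin (nv u), Qf (Ga u - Gb u)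
              (fun x => z (⟨u, i⟩, x) - (fun _ : Fin U × Fin p => (0 : ℝ)) (u, x))
              (fun x => z (⟨u, i⟩, x) - (fun _ : Fin U × Fin p => (0 : ℝ)) (u, x))
              = (if i = i0 then Qf (Ga u - Gb u) f f
                 else if i = i1 then Qf (Ga u - Gb u) f f else 0) := by
            intro i
            by_cases hI0 : i = i0
            · subst hI0
              rw [if_pos rfl]
              refine Qf_congr (fun x => ?_) (fun x => ?_) <;>
                · rw [hzval]; simp
            · by_cases hI1 : i = i1
              · subst hI1
                rw [if_neg hI0, if_pos rfl]
                rw [show (fun x => z (⟨u, i1⟩, x)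
                    - (fun _ : Fin U × Fin p => (0 : ℝ)) (u, x)) = fun x => -(f x) from
                  funext fun x => by rw [hzval]; simp [Ne.symm h01, Sigma.mk.inj_iff]]
                exact Qf_neg_neg _ _ _
              · rw [if_neg hI0, if_neg hI1]
                refine Qf_zero_left (fun x => ?_) _
                rw [hzval]
                simp [hI0, hI1]
          rw [Finset.sum_congr rfl fun i _ => key i, sum_two h01]
          ring
        · intro u' _ hu'
          refine Finset.sum_eq_zero fun i _ => Qf_zero_left (fun x => ?_) _
          rw [hzval]
          simp [Sigma.mk.inj_iff, hu']
        · intro h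
          exact absurd (Finset.mem_univ u) h
      rw [hH0, hsum, zero_add] at h0
      linarith
    · -- Ga u PSD when nv u = 1
      intro u _
      have e : (Gs.submatrix (fun x : Fin p => ((⟨u, ⟨0, hnv u⟩⟩ : Σ u', Fin (nv u')), x))
          (fun x : Fin p => ((⟨u, ⟨0, hnv u⟩⟩ : Σ u', Fin (nv u')), x))) = Ga u := by
        ext x y
        simp [Matrix.submatrix_apply, hdiag]
      rw [← e]
      exact hGs.submatrix _
  · -- reverse direction
    rintro ⟨hHpsd, h2, h3⟩
    have hpsdA : ∀ u, (Ga u - Gb u).PosSemidef := by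
      intro u
      by_cases h1u : nv u = 1
      · rw [hGb1 u h1u, sub_zero]
        exact h3 u h1u
      · exact h2 u (by have := hnv u; omega)
    refine .of_dotProduct_mulVec_nonneg hGsherm ?_
    intro z
    rw [star_trivial]
    have hw : ∀ u x, (nv u : ℝ) *
        ((fun ux : Fin U × Fin p => (∑ i, z (⟨ux.1, i⟩, ux.2)) / (nv ux.1 : ℝ)) (u, x))
        = ∑ i, z (⟨u, i⟩, x) := by
      intro u x
      rw [mul_comm]
      exact div_mul_cancel₀ _ (hn0 u)
    rw [master z (fun ux : Fin U × Fin p => (∑ i, z (⟨ux.1, i⟩, ux.2)) / (nv ux.1 : ℝ)) hw]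
    have h1 : 0 ≤ (fun ux : Fin U × Fin p => (∑ i, z (⟨ux.1, i⟩, ux.2)) / (nv ux.1 : ℝ)) ⬝ᵥ
        H *ᵥ (fun ux : Fin U × Fin p => (∑ i, z (⟨ux.1, i⟩, ux.2)) / (nv ux.1 : ℝ)) := by
      simpa using hHpsd.dotProduct_mulVec_nonneg (fun ux : Fin U × Fin p => (∑ i, z (⟨ux.1, i⟩, ux.2)) / (nv ux.1 : ℝ))
    have h2' : 0 ≤ ∑ u, ∑ i : Fin (nv u), Qf (Ga u - Gb u)
        (fun x => z (⟨u, i⟩, x) - (fun ux : Fin U × Fin p =>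
          (∑ i, z (⟨ux.1, i⟩, ux.2)) / (nv ux.1 : ℝ)) (u, x))
        (fun x => z (⟨u, i⟩, x) - (fun ux : Fin U × Fin p =>
          (∑ i, z (⟨ux.1, i⟩, ux.2)) / (nv ux.1 : ℝ)) (u, x)) :=
      Finset.sum_nonneg fun u _ => Finset.sum_nonneg fun i _ => Qf_nonneg (hpsdA u) _
    linarith
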